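/- Let I, J ⊆ ℝ₊ be nonempty intervals with inf(I·I^{-1}) ≤ inf(J·J^{-1}), and let n ≥ 2. Then Γ_n(I) ⊆ Γ_n(J). In particular if J ⊆ I then Γ_n(I) ⊆ Γ_n(J). -/

import Mathlib

open Real Finset Pointwise Topology Filter

noncomputable def gini (p q : ℝ) {n : ℕ} (x : Fin n → ℝ) : ℝ :=
  if p = q then Real.exp ((∑ i, x i ^ p * Real.log (x i)) / ∑ i, x i ^ p)
  else ((∑ i, x i ^ p) / ∑ i, x i ^ q) ^ (1 / (p - q))
def Gamma (n : ℕ) (I : Set ℝ) : Set ((ℝ × ℝ) × (ℝ × ℝ)) :=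
  {w | ∀ x : Fin n → ℝ, (∀ i, x i ∈ I) → gini w.1.1 w.1.2 x ≤ gini w.2.1 w.2.2 x}

lemma sum_rpow_pos {n : ℕ} [Nonempty (Fin n)] (x : Fin n → ℝ) (hx : ∀ i, 0 < x i) (p : ℝ) :
    0 < ∑ i, x i ^ p :=
  Finset.sum_pos (fun i _ => Real.rpow_pos_of_pos (hx i) p) Finset.univ_nonempty

lemma gini_smul (p q : ℝ) {n : ℕ} [Nonempty (Fin n)] {c : ℝ} (hc : 0 < c)
    (x : Fin n → ℝ) (hx : ∀ i, 0 < x i) :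
    gini p q (fun i => c * x i) = c * gini p q x := by
  have hS := sum_rpow_pos x hx
  have hcp : ∀ r : ℝ, (0:ℝ) < c ^ r := fun r => Real.rpow_pos_of_pos hc r
  have e2 : ∀ r : ℝ, ∑ i, (c * x i) ^ r = c ^ r * ∑ i, x i ^ r := by
    intro r
    rw [Finset.mul_sum]
    exact Finset.sum_congr rfl fun i _ => Real.mul_rpow hc.le (hx i).le
  unfold gini
  split_ifs with hpq
  · subst hpq
    have e1 : ∑ i, (c * x i) ^ p * Real.log (c * x i)
        = c ^ p * Real.log c * ∑ i, x i ^ p + c ^ p * ∑ i, x i ^ p * Real.log (x i) := by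
      have e : ∀ i : Fin n, (c * x i) ^ p * Real.log (c * x i)
          = c ^ p * Real.log c * x i ^ p + c ^ p * (x i ^ p * Real.log (x i)) := fun i => by
        rw [Real.mul_rpow hc.le (hx i).le, Real.log_mul hc.ne' (hx i).ne']; ring
      simp only [e]
      rw [Finset.sum_add_distrib, ← Finset.mul_sum, ← Finset.mul_sum]
    rw [e1, e2]
    have e3 : (c ^ p * Real.log c * ∑ i, x i ^ p + c ^ p * ∑ i, x i ^ p * Real.log (x i))
        / (c ^ p * ∑ i, x i ^ p)
        = Real.log c + (∑ i, x i ^ p * Real.log (x i)) / ∑ i, x i ^ p := by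
      have h1 : (∑ i, x i ^ p) ≠ 0 := (hS p).ne'
      have h2 : c ^ p ≠ 0 := (hcp p).ne'
      field_simp
    rw [e3, Real.exp_add, Real.exp_log hc]
  · rw [e2, e2]
    have key : (c ^ p * ∑ i, x i ^ p) / (c ^ q * ∑ i, x i ^ q)
        = c ^ (p - q) * ((∑ i, x i ^ p) / ∑ i, x i ^ q) := by
      rw [Real.rpow_sub hc]
      field_simp
    rw [key, Real.mul_rpow (hcp _).le (div_nonneg (hS p).le (hS q).le),
      ← Real.rpow_mul hc.le, mul_one_div_cancel (sub_ne_zero.mpr hpq), Real.rpow_one]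

lemma gini_const (p q : ℝ) {n : ℕ} [Nonempty (Fin n)] {v : ℝ} (hv : 0 < v) :
    gini p q (fun _ : Fin n => v) = v := by
  have hn : (0:ℝ) < n := by
    have : 0 < n := Fin.pos_iff_nonempty.mpr ‹_›
    exact_mod_cast this
  have hvp : ∀ r : ℝ, (0:ℝ) < v ^ r := fun r => Real.rpow_pos_of_pos hv r
  unfold gini
  simp only [Finset.sum_const, Finset.card_univ, Fintype.card_fin, nsmul_eq_mul]
  split_ifs with hpq
  · rw [mul_div_mul_left _ _ hn.ne', mul_div_cancel_left₀ _ (hvp p).ne', Real.exp_log hv]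
  · rw [mul_div_mul_left _ _ hn.ne', ← Real.rpow_sub hv,
      ← Real.rpow_mul hv.le, mul_one_div_cancel (sub_ne_zero.mpr hpq), Real.rpow_one]

lemma continuous_fixed_base_rpow {b : ℝ} (hb : 0 < b) : Continuous fun t : ℝ => b ^ t := by
  have e : (fun t : ℝ => b ^ t) = fun t => Real.exp (Real.log b * t) := by
    funext t; rw [Real.rpow_def_of_pos hb]
  rw [e]
  exact Real.continuous_exp.comp (continuous_const.mul continuous_id)

lemma gini_continuousAt (p q : ℝ) {n : ℕ} [Nonempty (Fin n)] (x : Fin n → ℝ)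
    (hx : ∀ i, 0 < x i) : ContinuousAt (gini p q) x := by
  have hS := sum_rpow_pos x hx
  have happ : ∀ i : Fin n, ContinuousAt (fun y : Fin n → ℝ => y i) x := fun i =>
    (continuous_apply i).continuousAt
  have hsum : ∀ r : ℝ, ContinuousAt (fun y : Fin n → ℝ => ∑ i, y i ^ r) x := by
    intro r
    exact tendsto_finset_sum _ fun i _ => (happ i).rpow_const (Or.inl (hx i).ne')
  have hnum : ContinuousAt (fun y : Fin n → ℝ => ∑ i, y i ^ p * Real.log (y i)) x := by
    exact tendsto_finset_sum _ fun i _ =>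
      ((happ i).rpow_const (Or.inl (hx i).ne')).mul ((happ i).log (hx i).ne')
  rcases eq_or_ne p q with hpq | hpq
  · subst hpq
    have egini : (gini p p : (Fin n → ℝ) → ℝ) =
        fun y => Real.exp ((∑ i, y i ^ p * Real.log (y i)) / ∑ i, y i ^ p) := by
      funext y; simp only [gini, if_pos rfl, if_true]
    rw [egini]
    exact (hnum.div (hsum p) (hS p).ne').rexp
  · have egini : (gini p q : (Fin n → ℝ) → ℝ) =
        fun y => ((∑ i, y i ^ p) / ∑ i, y i ^ q) ^ (1 / (p - q)) := by
      funext y; simp only [gini, if_neg hpq]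
    rw [egini]
    exact ((hsum p).div (hsum q) (hS q).ne').rpow_const (Or.inl (div_pos (hS p) (hS q)).ne')

theorem Gamma_mono_of_inf_ratio (I J : Set ℝ) (hI : I.Nonempty) (hJ : J.Nonempty)
    (hIpos : I ⊆ Set.Ioi 0) (hJpos : J ⊆ Set.Ioi 0)
    (hIint : I.OrdConnected) (hJint : J.OrdConnected)
    (h : sInf (I * I⁻¹) ≤ sInf (J * J⁻¹)) (n : ℕ) (hn : 2 ≤ n) :
    Gamma n I ⊆ Gamma n J := by
  haveI : Nonempty (Fin n) := Fin.pos_iff_nonempty.mp (by omega)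
  have hne : (I * I⁻¹).Nonempty := by
    obtain ⟨a, ha⟩ := hI
    exact ⟨a * a⁻¹, Set.mul_mem_mul ha (Set.inv_mem_inv.mpr ha)⟩
  rintro ⟨⟨r, s⟩, p, q⟩ hw
  simp only [_root_.Gamma, Set.mem_setOf_eq] at hw ⊢
  intro x hx
  have hxpos : ∀ i, 0 < x i := fun i => hJpos (hx i)
  -- key: comparison for any positive tuple whose spread is strictly inside that of I
  have key : ∀ z : Fin n → ℝ, (∀ i, 0 < z i) →
      sInf (I * I⁻¹) < (univ.inf' univ_nonempty z) / (univ.sup' univ_nonempty z) →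
      gini r s z ≤ gini p q z := by
    intro z hz hlt
    set m := univ.inf' univ_nonempty z with hm_def
    set M := univ.sup' univ_nonempty z with hM_def
    have hm : 0 < m := (Finset.lt_inf'_iff _).mpr fun i _ => hz i
    have hmM : m ≤ M := by
      obtain ⟨i⟩ := (inferInstance : Nonempty (Fin n))
      exact le_trans (Finset.inf'_le _ (mem_univ i)) (Finset.le_sup' _ (mem_univ i))
    have hM : 0 < M := hm.trans_le hmM
    obtain ⟨u, huI, hu⟩ := exists_lt_of_csInf_lt hne hlt
    obtain ⟨a, ha, binv, hbinv, rfl⟩ := huI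
    rw [Set.mem_inv] at hbinv
    set b := binv⁻¹ with hb_def
    have hbI : b ∈ I := hbinv
    have hb : 0 < b := hIpos hbI
    have ha0 : 0 < a := hIpos ha
    have hu' : a / b < m / M := by
      rwa [div_eq_mul_inv, hb_def, inv_inv]
    set c := b / M with hc_def
    have hc : 0 < c := div_pos hb hM
    have hmem : ∀ i, c * z i ∈ I := by
      intro i
      have h1 : m ≤ z i := Finset.inf'_le _ (mem_univ i)
      have h2 : z i ≤ M := Finset.le_sup' _ (mem_univ i)
      have hub : c * z i ≤ b := by
        calc c * z i ≤ c * M := mul_le_mul_of_nonneg_left h2 hc.le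
          _ = b := div_mul_cancel₀ b hM.ne'
      have hlb : a ≤ c * z i := by
        have h4 : a < c * m := by
          have h5 : a < m / M * b := (div_lt_iff₀ hb).mp hu'
          calc a < m / M * b := h5
            _ = c * m := by rw [hc_def]; ring
        exact (h4.trans_le (mul_le_mul_of_nonneg_left h1 hc.le)).le
      exact hIint.out ha hbI ⟨hlb, hub⟩
    have hle := hw (fun i => c * z i) hmem
    rw [gini_smul r s hc z hz, gini_smul p q hc z hz] at hle
    exact le_of_mul_le_mul_left hle hc
  -- main argument
  set m := univ.inf' univ_nonempty x with hm_def
  set M := univ.sup' univ_nonempty x with hM_def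
  have hm : 0 < m := (Finset.lt_inf'_iff _).mpr fun i _ => hxpos i
  obtain ⟨i0, -, hi0⟩ := Finset.exists_mem_eq_inf' univ_nonempty x
  obtain ⟨i1, -, hi1⟩ := Finset.exists_mem_eq_sup' univ_nonempty x
  have hmM : m ≤ M := by
    obtain ⟨i⟩ := (inferInstance : Nonempty (Fin n))
    exact le_trans (Finset.inf'_le _ (mem_univ i)) (Finset.le_sup' _ (mem_univ i))
  have hM : 0 < M := hm.trans_le hmM
  by_cases hcase : m = M
  · have hxc : x = fun _ => M := funext fun i =>
      le_antisymm (Finset.le_sup' _ (mem_univ i))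
        (by rw [← hcase]; exact Finset.inf'_le _ (mem_univ i))
    rw [hxc, gini_const r s hM, gini_const p q hM]
  · have hmM' : m < M := lt_of_le_of_ne hmM hcase
    have hratio : m / M < 1 := (div_lt_one hM).mpr hmM'
    have hJmem : m / M ∈ J * J⁻¹ := by
      rw [div_eq_mul_inv]
      refine Set.mul_mem_mul ?_ (Set.inv_mem_inv.mpr ?_)
      · rw [hm_def, hi0]; exact hx i0
      · rw [hM_def, hi1]; exact hx i1
    have hbdd : BddBelow (J * J⁻¹) := by
      refine ⟨0, fun u hu => ?_⟩
      obtain ⟨a, ha, b, hb, rfl⟩ := hu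
      rw [Set.mem_inv] at hb
      exact (mul_pos (hJpos ha) (inv_pos.mp (hJpos hb))).le
    have hsJ : sInf (I * I⁻¹) ≤ m / M := h.trans (csInf_le hbdd hJmem)
    have hMt : ∀ t : ℝ, (0:ℝ) < M ^ (1 - t) := fun t => Real.rpow_pos_of_pos hM _
    set y : ℝ → Fin n → ℝ := fun t i => x i ^ t * M ^ (1 - t) with hy_def
    have hypos : ∀ t i, 0 < y t i := fun t i =>
      mul_pos (Real.rpow_pos_of_pos (hxpos i) t) (hMt t)
    have hy1 : y 1 = x := funext fun i => by
      simp [hy_def, Real.rpow_one, Real.rpow_zero]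
    have hev : ∀ t ∈ Set.Ioo (0:ℝ) 1, gini r s (y t) ≤ gini p q (y t) := by
      intro t ht
      refine key (y t) (hypos t) ?_
      have hlow : ∀ i, m ^ t * M ^ (1 - t) ≤ y t i := fun i =>
        mul_le_mul_of_nonneg_right
          (Real.rpow_le_rpow hm.le (Finset.inf'_le _ (mem_univ i)) ht.1.le) (hMt t).le
      have hup : ∀ i, y t i ≤ M := by
        intro i
        have hxt : x i ^ t ≤ M ^ t :=
          Real.rpow_le_rpow (hxpos i).le (Finset.le_sup' _ (mem_univ i)) ht.1.le
        calc y t i ≤ M ^ t * M ^ (1 - t) := mul_le_mul_of_nonneg_right hxt (hMt t).le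
          _ = M := by rw [← Real.rpow_add hM]; norm_num
      have hinf : m ^ t * M ^ (1 - t) ≤ univ.inf' univ_nonempty (y t) :=
        (Finset.le_inf'_iff univ_nonempty (y t)).mpr fun i _ => hlow i
      have hsup : univ.sup' univ_nonempty (y t) ≤ M :=
        (Finset.sup'_le_iff _ _).mpr fun i _ => hup i
      have hsup0 : 0 < univ.sup' univ_nonempty (y t) :=
        (Finset.lt_sup'_iff _).mpr ⟨i0, mem_univ i0, hypos t i0⟩
      have heq : m ^ t * M ^ (1 - t) / M = (m / M) ^ t := by
        rw [Real.div_rpow hm.le hM.le, Real.rpow_sub hM, Real.rpow_one]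
        field_simp
      have hstep : (m / M) ^ t ≤
          univ.inf' univ_nonempty (y t) / univ.sup' univ_nonempty (y t) := by
        rw [← heq]
        exact div_le_div₀ (le_trans (by positivity) hinf) hinf hsup0 hsup
      have hgt : m / M < (m / M) ^ t := by
        have h6 := Real.rpow_lt_rpow_of_exponent_gt (div_pos hm hM) hratio ht.2
        simpa [Real.rpow_one] using h6
      exact ((hsJ.trans_lt hgt).trans_le hstep)
    have hyc : Continuous y := continuous_pi fun i =>
      (continuous_fixed_base_rpow (hxpos i)).mul
        ((continuous_fixed_base_rpow hM).comp (continuous_const.sub continuous_id))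
    have hyT : Filter.Tendsto y (𝓝[<] (1:ℝ)) (𝓝 x) := by
      have h7 := hyc.continuousAt (x := (1:ℝ))
      rw [ContinuousAt, hy1] at h7
      exact h7.mono_left nhdsWithin_le_nhds
    have h1 : Filter.Tendsto (fun t => gini r s (y t)) (𝓝[<] (1:ℝ)) (𝓝 (gini r s x)) :=
      Filter.Tendsto.comp (gini_continuousAt r s x hxpos) hyT
    have h2 : Filter.Tendsto (fun t => gini p q (y t)) (𝓝[<] (1:ℝ)) (𝓝 (gini p q x)) :=
      Filter.Tendsto.comp (gini_continuousAt p q x hxpos) hyT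
    have hevf : ∀ᶠ t in 𝓝[<] (1:ℝ), gini r s (y t) ≤ gini p q (y t) := by
      filter_upwards [Ioo_mem_nhdsLT_of_mem (by norm_num : (1:ℝ) ∈ Set.Ioc 0 1)] with t ht
      exact hev t ht
    exact le_of_tendsto_of_tendsto h1 h2 hevf
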